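/- arXiv:2508.07906 — 2 statements merged into one kernel-verified Lean document; each statement's English description precedes it below -/
import Mathlib

section
/- The Euler–Mascheroni constant γ satisfies 1 − γ = ∫_0^1 (1 − e^{−u} − u) u^{−2} du + ∫_1^∞ (1 − e^{−u}) u^{−2} du. -/
open Real MeasureTheory

section auxEMC
open Set Filter Topology

lemma gammaDeriv_integral :
    ∫ t in Ioi (0:ℝ), exp (-t) * log t = -Real.eulerMascheroniConstant := by
  have h1 : HasDerivAt Complex.GammaIntegral
      (∫ t : ℝ in Ioi 0, (t:ℂ) ^ ((1:ℂ) - 1) * (Real.log t * Real.exp (-t))) 1 :=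
    Complex.hasDerivAt_GammaIntegral (by norm_num)
  have hC : (∫ t : ℝ in Ioi 0, (t:ℂ) ^ ((1:ℂ) - 1) * (Real.log t * Real.exp (-t)))
      = ((∫ t : ℝ in Ioi 0, Real.exp (-t) * Real.log t : ℝ) : ℂ) := by
    rw [show ((∫ t in Ioi (0:ℝ), Real.exp (-t) * Real.log t : ℝ) : ℂ) = ∫ t in Ioi (0:ℝ), ((Real.exp (-t) * Real.log t : ℝ) : ℂ) from (integral_ofReal).symm]
    refine setIntegral_congr_fun measurableSet_Ioi fun t ht => ?_
    simp only [sub_self, Complex.cpow_zero, one_mul, Complex.ofReal_mul]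
    ring
  rw [hC] at h1
  -- transfer to Complex.Gamma near 1
  have h2 : HasDerivAt Complex.Gamma
      ((∫ t : ℝ in Ioi 0, Real.exp (-t) * Real.log t : ℝ) : ℂ) 1 := by
    refine h1.congr_of_eventuallyEq ?_
    have hopen : {z : ℂ | 0 < z.re} ∈ 𝓝 (1:ℂ) := by
      refine IsOpen.mem_nhds ?_ (by norm_num)
      exact isOpen_lt continuous_const Complex.continuous_re
    filter_upwards [hopen] with z hz
    exact Complex.Gamma_eq_integral hz
  have h3 : HasDerivAt Real.Gamma (∫ t in Ioi (0:ℝ), exp (-t) * log t) 1 := by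
    have := h2.real_of_complex
    simpa [show Real.Gamma = fun x : ℝ => (Complex.Gamma x).re from rfl] using this
  have h4 := Real.hasDerivAt_Gamma_one
  have := h3.unique h4
  linarith

-- integrability of exp(-u) * log u near 0
lemma intL_Ioc : IntegrableOn (fun u : ℝ => exp (-u) * log u) (Ioc (0:ℝ) 1) := by
  have hg : IntegrableOn (fun u : ℝ => 2 * u ^ (-(1:ℝ)/2)) (Ioc (0:ℝ) 1) := by
    have := (intervalIntegral.intervalIntegrable_rpow' (a := 0) (b := 1) (r := -(1:ℝ)/2) (by norm_num))
    exact ((intervalIntegrable_iff_integrableOn_Ioc_of_le (by norm_num)).mp this).const_mul 2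
  refine Integrable.mono' hg ?_ ?_
  · refine (ContinuousOn.aestronglyMeasurable ?_ measurableSet_Ioc)
    exact ((continuous_exp.comp continuous_neg).continuousOn).mul
      (Real.continuousOn_log.mono (fun x hx => ne_of_gt hx.1))
  · filter_upwards [ae_restrict_mem measurableSet_Ioc] with u hu
    have hu0 : 0 < u := hu.1
    have h1 : ‖exp (-u) * log u‖ = exp (-u) * |log u| := by
      rw [norm_mul, Real.norm_eq_abs, Real.norm_eq_abs, abs_of_pos (exp_pos _)]
    rw [h1]
    have h2 : exp (-u) ≤ 1 := exp_le_one_iff.mpr (by linarith [hu0])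
    have h3 : |log u| = -log u := abs_of_nonpos (log_nonpos hu0.le hu.2)
    have h4 : -log u ≤ 2 * u ^ (-(1:ℝ)/2) := by
      have : log (u ^ (-(1:ℝ)/2)) = (-(1:ℝ)/2) * log u := Real.log_rpow hu0 _
      have h5 : log (u ^ (-(1:ℝ)/2)) ≤ u ^ (-(1:ℝ)/2) - 1 :=
        Real.log_le_sub_one_of_pos (Real.rpow_pos_of_pos hu0 _)
      nlinarith [Real.rpow_pos_of_pos hu0 (-(1:ℝ)/2)]
    calc exp (-u) * |log u| ≤ 1 * |log u| := by
            exact mul_le_mul_of_nonneg_right h2 (abs_nonneg _)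
      _ = -log u := by rw [one_mul, h3]
      _ ≤ 2 * u ^ (-(1:ℝ)/2) := h4

lemma intL_Ioi : IntegrableOn (fun u : ℝ => exp (-u) * log u) (Ioi (1:ℝ)) := by
  have hg : IntegrableOn (fun u : ℝ => exp (-u) * u ^ ((2:ℝ)-1)) (Ioi (1:ℝ)) :=
    (Real.GammaIntegral_convergent (by norm_num : (0:ℝ) < 2)).mono_set
      (Ioi_subset_Ioi (by norm_num))
  refine Integrable.mono' hg ?_ ?_
  · refine (ContinuousOn.aestronglyMeasurable ?_ measurableSet_Ioi)
    exact ((continuous_exp.comp continuous_neg).continuousOn).mul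
      (Real.continuousOn_log.mono (fun x hx => by simp only [mem_compl_iff, mem_singleton_iff]; intro h; rw [h] at hx; exact absurd hx (by simp)))
  · filter_upwards [ae_restrict_mem measurableSet_Ioi] with u hu
    have hu1 : (1:ℝ) < u := hu
    have hu0 : (0:ℝ) < u := by linarith
    have hlog : 0 ≤ log u := log_nonneg hu1.le
    have hlu : log u ≤ u := (log_le_sub_one_of_pos hu0).trans (by linarith)
    rw [norm_mul, Real.norm_eq_abs, Real.norm_eq_abs, abs_of_pos (exp_pos _),
      abs_of_nonneg hlog, show ((2:ℝ)-1) = 1 by norm_num, Real.rpow_one]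
    exact mul_le_mul_of_nonneg_left hlu (exp_pos _).le

lemma int_g1 : IntegrableOn (fun u : ℝ => (1 - exp (-u) - u) / u ^ 2) (Ioc (0:ℝ) 1) := by
  refine Integrable.mono' (g := fun _ => (1:ℝ)) (integrableOn_const measure_Ioc_lt_top.ne) ?_ ?_
  · refine (ContinuousOn.aestronglyMeasurable ?_ measurableSet_Ioc)
    refine ContinuousOn.div (by fun_prop) (by fun_prop) (fun x hx => by have : (0:ℝ) < x := hx.1; positivity)
  · filter_upwards [ae_restrict_mem measurableSet_Ioc] with u hu
    have hu0 : 0 < u := hu.1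
    have habs : |exp (-u) - 1 - (-u)| ≤ (-u) ^ 2 :=
      Real.abs_exp_sub_one_sub_id_le (by rw [abs_neg, abs_of_pos hu0]; exact hu.2)
    have : |1 - exp (-u) - u| ≤ u ^ 2 := by
      rw [show (1 : ℝ) - exp (-u) - u = -(exp (-u) - 1 - (-u)) by ring, abs_neg]
      simpa using habs
    rw [Real.norm_eq_abs, abs_div, abs_of_pos (by positivity : (0:ℝ) < u ^ 2)]
    rw [div_le_iff₀ (by positivity : (0:ℝ) < u ^ 2)]
    simpa using this

lemma int_g2 : IntegrableOn (fun u : ℝ => (1 - exp (-u)) / u ^ 2) (Ioi (1:ℝ)) := by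
  refine Integrable.mono' (integrableOn_Ioi_rpow_of_lt (by norm_num : (-2:ℝ) < -1) one_pos) ?_ ?_
  · refine (ContinuousOn.aestronglyMeasurable ?_ measurableSet_Ioi)
    refine ContinuousOn.div (by fun_prop) (by fun_prop) (fun x hx => by have : (0:ℝ) < x := lt_trans one_pos hx; positivity)
  · filter_upwards [ae_restrict_mem measurableSet_Ioi] with u hu
    have hu1 : (1:ℝ) < u := hu
    have hu0 : (0:ℝ) < u := by linarith
    have h1 : |1 - exp (-u)| ≤ 1 := by
      rw [abs_of_nonneg (by linarith [exp_le_one_iff.mpr (by linarith : -u ≤ 0)])]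
      linarith [exp_pos (-u)]
    rw [Real.norm_eq_abs, abs_div, abs_of_pos (by positivity : (0:ℝ) < u ^ 2),
      Real.rpow_neg hu0.le, Real.rpow_two]
    rw [div_le_iff₀ (by positivity : (0:ℝ) < u ^ 2), inv_mul_cancel₀ (by positivity)]
    exact h1

lemma hasDerivAt_H {u : ℝ} (hu : 0 < u) :
    HasDerivAt (fun u : ℝ => (exp (-u) - 1) / u + exp (-u) * log u)
      ((1 - exp (-u)) / u ^ 2 - exp (-u) * log u) u := by
  have he : HasDerivAt (fun u : ℝ => exp (-u)) (-exp (-u)) u := by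
    simpa using (hasDerivAt_neg u).exp
  have h1 : HasDerivAt (fun u : ℝ => (exp (-u) - 1) / u)
      (((-exp (-u)) * u - (exp (-u) - 1) * 1) / u ^ 2) u :=
    (he.sub_const 1).div (hasDerivAt_id u) hu.ne'
  have h2 : HasDerivAt (fun u : ℝ => exp (-u) * log u)
      ((-exp (-u)) * log u + exp (-u) * u⁻¹) u :=
    he.mul (Real.hasDerivAt_log hu.ne')
  refine (h1.add h2).congr_deriv ?_
  field_simp [hu.ne']
  ring

lemma hasDerivAt_K {u : ℝ} (hu : 0 < u) :
    HasDerivAt (fun u : ℝ => (exp (-u) - 1) / u + (exp (-u) - 1) * log u)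
      ((1 - exp (-u) - u) / u ^ 2 - exp (-u) * log u) u := by
  have he : HasDerivAt (fun u : ℝ => exp (-u)) (-exp (-u)) u := by
    simpa using (hasDerivAt_neg u).exp
  have h1 : HasDerivAt (fun u : ℝ => (exp (-u) - 1) / u)
      (((-exp (-u)) * u - (exp (-u) - 1) * 1) / u ^ 2) u :=
    (he.sub_const 1).div (hasDerivAt_id u) hu.ne'
  have h2 : HasDerivAt (fun u : ℝ => (exp (-u) - 1) * log u)
      ((-exp (-u)) * log u + (exp (-u) - 1) * u⁻¹) u :=
    (he.sub_const 1).mul (Real.hasDerivAt_log hu.ne')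
  refine (h1.add h2).congr_deriv ?_
  field_simp [hu.ne']
  ring

lemma tendstoH : Tendsto (fun u : ℝ => (exp (-u) - 1) / u + exp (-u) * log u)
    atTop (𝓝 0) := by
  have t1 : Tendsto (fun u : ℝ => (exp (-u) - 1) / u) atTop (𝓝 0) := by
    have : Tendsto (fun u : ℝ => (exp (-u) - 1) * u⁻¹) atTop (𝓝 ((0 - 1) * 0)) := by
      exact ((Real.tendsto_exp_neg_atTop_nhds_zero).sub_const 1).mul tendsto_inv_atTop_zero
    simpa [div_eq_mul_inv] using this
  have t2 : Tendsto (fun u : ℝ => exp (-u) * log u) atTop (𝓝 0) := by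
    have hb : Tendsto (fun u : ℝ => u ^ 1 * exp (-u)) atTop (𝓝 0) :=
      tendsto_pow_mul_exp_neg_atTop_nhds_zero 1
    refine squeeze_zero' ?_ ?_ (by simpa using hb)
    · filter_upwards [eventually_ge_atTop (1:ℝ)] with u hu
      exact mul_nonneg (exp_pos _).le (log_nonneg hu)
    · filter_upwards [eventually_ge_atTop (1:ℝ)] with u hu
      have hu0 : (0:ℝ) < u := by linarith
      have : log u ≤ u := (log_le_sub_one_of_pos hu0).trans (by linarith)
      calc exp (-u) * log u ≤ exp (-u) * u := by
              exact mul_le_mul_of_nonneg_left this (exp_pos _).le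
        _ = u * exp (-u) := by rw [mul_comm]
  simpa using t1.add t2

lemma tendstoK : Tendsto (fun u : ℝ => (exp (-u) - 1) / u + (exp (-u) - 1) * log u)
    (𝓝[>] (0:ℝ)) (𝓝 (-1)) := by
  have k1 : Tendsto (fun u : ℝ => (exp (-u) - 1) / u) (𝓝[>] (0:ℝ)) (𝓝 (-1)) := by
    have hexp : Tendsto (slope exp 0) (𝓝[≠] (0:ℝ)) (𝓝 1) :=
      hasDerivAt_iff_tendsto_slope.mp (by simpa using Real.hasDerivAt_exp 0)
    have hneg : Tendsto (fun u : ℝ => -u) (𝓝[>] (0:ℝ)) (𝓝[≠] (0:ℝ)) := by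
      apply tendsto_nhdsWithin_of_tendsto_nhds_of_eventually_within
      · exact (continuous_neg.tendsto' 0 0 (by simp)).mono_left nhdsWithin_le_nhds
      · filter_upwards [self_mem_nhdsWithin] with x hx
        simpa using (ne_of_gt hx)
    have := hexp.comp hneg
    have h2 : Tendsto (fun u : ℝ => (exp (-u) - 1) / (-u)) (𝓝[>] (0:ℝ)) (𝓝 1) := by
      refine this.congr fun u => ?_
      simp [slope_def_field, Real.exp_zero]
    have := h2.neg
    convert this using 2 with u
    rw [div_neg, neg_neg]
  have k2 : Tendsto (fun u : ℝ => (exp (-u) - 1) * log u) (𝓝[>] (0:ℝ)) (𝓝 0) := by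
    have hg : Tendsto (fun u : ℝ => 2 * |log u * u ^ (1:ℝ)|) (𝓝[>] (0:ℝ)) (𝓝 0) := by
      have := (tendsto_log_mul_rpow_nhdsGT_zero one_pos).abs.const_mul 2
      simpa using this
    refine squeeze_zero_norm' ?_ hg
    filter_upwards [Ioo_mem_nhdsGT_of_mem (left_mem_Ico.mpr one_pos)] with u hu
    have hu0 : 0 < u := hu.1
    have habs : |exp (-u) - 1| ≤ 2 * |(-u)| :=
      Real.abs_exp_sub_one_le (by rw [abs_neg, abs_of_pos hu0]; exact hu.2.le)
    rw [Real.norm_eq_abs, abs_mul]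
    calc |exp (-u) - 1| * |log u| ≤ (2 * |(-u)|) * |log u| :=
          mul_le_mul_of_nonneg_right habs (abs_nonneg _)
      _ = 2 * |log u * u ^ (1:ℝ)| := by
          rw [abs_neg, abs_of_pos hu0, Real.rpow_one, abs_mul, abs_of_pos hu0]; ring
  simpa using k1.add k2

lemma part1 : ∫ u in Ioi (1:ℝ), ((1 - exp (-u)) / u ^ 2 - exp (-u) * log u)
    = 1 - exp (-1) := by
  have := integral_Ioi_of_hasDerivAt_of_tendsto' (a := 1)
    (f := fun u : ℝ => (exp (-u) - 1) / u + exp (-u) * log u)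
    (f' := fun u : ℝ => (1 - exp (-u)) / u ^ 2 - exp (-u) * log u)
    (fun x hx => hasDerivAt_H (lt_of_lt_of_le one_pos hx))
    (int_g2.sub intL_Ioi) tendstoH
  rw [this]
  simp [Real.log_one]

lemma part2 : ∫ u in Ioo (0:ℝ) 1, ((1 - exp (-u) - u) / u ^ 2 - exp (-u) * log u)
    = exp (-1) := by
  set K : ℝ → ℝ := fun u => (exp (-u) - 1) / u + (exp (-u) - 1) * log u with hK
  set f' : ℝ → ℝ := fun u => (1 - exp (-u) - u) / u ^ 2 - exp (-u) * log u with hf'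
  have hint : IntegrableOn f' (Ioc (0:ℝ) 1) := int_g1.sub intL_Ioc
  set s : ℕ → Set ℝ := fun n => Ioo ((n + 2 : ℝ))⁻¹ 1 with hs
  have hsm : ∀ n, MeasurableSet (s n) := fun n => measurableSet_Ioo
  have hmono : Monotone s := by
    intro m n hmn
    apply Ioo_subset_Ioo _ le_rfl
    apply inv_anti₀ (by positivity)
    have : (m:ℝ) ≤ n := Nat.cast_le.mpr hmn
    linarith
  have hunion : ⋃ n, s n = Ioo (0:ℝ) 1 := by
    ext x
    simp only [mem_iUnion, hs, mem_Ioo]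
    constructor
    · rintro ⟨n, h1, h2⟩
      exact ⟨lt_trans (by positivity) h1, h2⟩
    · rintro ⟨h1, h2⟩
      obtain ⟨n, hn⟩ := exists_nat_gt x⁻¹
      refine ⟨n, ?_, h2⟩
      rw [inv_lt_comm₀ (by positivity) h1]
      calc x⁻¹ < n := hn
        _ ≤ n + 2 := by linarith
  have hIoo : IntegrableOn f' (Ioo (0:ℝ) 1) := hint.mono_set Ioo_subset_Ioc_self
  have htend : Tendsto (fun n => ∫ x in s n, f' x) atTop (𝓝 (∫ x in Ioo (0:ℝ) 1, f' x)) := by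
    have := tendsto_setIntegral_of_monotone hsm hmono (hunion ▸ hIoo)
    rwa [hunion] at this
  -- compute each term of the sequence
  have hval : ∀ n : ℕ, ∫ x in s n, f' x = K 1 - K ((n + 2 : ℝ))⁻¹ := by
    intro n
    have ha : (0:ℝ) < ((n + 2 : ℝ))⁻¹ := by positivity
    have ha1 : ((n + 2 : ℝ))⁻¹ ≤ 1 := by
      rw [inv_le_one_iff₀]; right; linarith [Nat.cast_nonneg (α := ℝ) n]
    have heq : ∫ x in s n, f' x = ∫ x in ((n + 2 : ℝ))⁻¹..1, f' x := by
      rw [intervalIntegral.integral_of_le ha1, integral_Ioc_eq_integral_Ioo]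
    rw [heq]
    apply intervalIntegral.integral_eq_sub_of_hasDerivAt
    · intro x hx
      rw [uIcc_of_le ha1] at hx
      exact hasDerivAt_K (lt_of_lt_of_le ha hx.1)
    · rw [intervalIntegrable_iff_integrableOn_Ioc_of_le ha1]
      exact hint.mono_set (Ioc_subset_Ioc ha.le le_rfl)
  have hseq : Tendsto (fun n : ℕ => K 1 - K ((n + 2 : ℝ))⁻¹) atTop (𝓝 (K 1 - (-1))) := by
    apply Tendsto.const_sub
    apply tendstoK.comp
    apply tendsto_nhdsWithin_of_tendsto_nhds_of_eventually_within
    · have : Tendsto (fun n : ℕ => (n + 2 : ℝ)) atTop atTop :=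
        tendsto_atTop_add_const_right _ 2 tendsto_natCast_atTop_atTop
      exact this.inv_tendsto_atTop
    · filter_upwards with n
      simp only [mem_Ioi]
      positivity
  have := tendsto_nhds_unique (htend.congr fun n => hval n) hseq
  rw [this]
  simp [hK, Real.log_one]

lemma partL : (∫ u in Ioo (0:ℝ) 1, exp (-u) * log u) + (∫ u in Ioi (1:ℝ), exp (-u) * log u)
    = -Real.eulerMascheroniConstant := by
  rw [← gammaDeriv_integral]
  rw [show Ioi (0:ℝ) = Ioo (0:ℝ) 1 ∪ Ici 1 from (Ioo_union_Ici_eq_Ioi one_pos).symm]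
  rw [setIntegral_union (by simp only [disjoint_left, mem_Ioo, mem_Ici]; rintro a ⟨h1,h2⟩ h3; linarith) measurableSet_Ici
    (intL_Ioc.mono_set Ioo_subset_Ioc_self)
    ((integrableOn_Ici_iff_integrableOn_Ioi).mpr intL_Ioi)]
  rw [integral_Ici_eq_integral_Ioi]

end auxEMC

open Set Filter Topology in
theorem one_sub_eulerMascheroni_integral :
    1 - Real.eulerMascheroniConstant
      = (∫ u in Set.Ioo (0 : ℝ) 1, (1 - exp (-u) - u) / u ^ 2)
        + ∫ u in Set.Ioi (1 : ℝ), (1 - exp (-u)) / u ^ 2 := by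
  have hIooL : IntegrableOn (fun u : ℝ => exp (-u) * log u) (Ioo (0:ℝ) 1) :=
    intL_Ioc.mono_set Ioo_subset_Ioc_self
  have hIoo1 : IntegrableOn (fun u : ℝ => (1 - exp (-u) - u) / u ^ 2) (Ioo (0:ℝ) 1) :=
    int_g1.mono_set Ioo_subset_Ioc_self
  have e1 : ∫ u in Ioo (0:ℝ) 1, (1 - exp (-u) - u) / u ^ 2
      = exp (-1) + ∫ u in Ioo (0:ℝ) 1, exp (-u) * log u := by
    have := integral_add (hIoo1.sub hIooL) hIooL
    simp only [Pi.add_apply, Pi.sub_apply, sub_add_cancel] at this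
    rw [this, part2]
  have e2 : ∫ u in Ioi (1:ℝ), (1 - exp (-u)) / u ^ 2
      = (1 - exp (-1)) + ∫ u in Ioi (1:ℝ), exp (-u) * log u := by
    have := integral_add (int_g2.sub intL_Ioi) intL_Ioi
    simp only [Pi.add_apply, Pi.sub_apply, sub_add_cancel] at this
    rw [this, part1]
  rw [e1, e2]
  have := partL
  linarith
end

section
/- For all x > 0, the digamma function satisfies log x − 1/x ≤ Ψ(x) ≤ log x − 1/(2x). -/
open Real

/-- The digamma function `Ψ = Γ'/Γ`. -/
noncomputable def digamma (x : ℝ) : ℝ := deriv Real.Gamma x / Real.Gamma x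

open Set in
private lemma log_le_half_sub_inv {t : ℝ} (ht : 1 ≤ t) : log t ≤ (t - 1/t) / 2 := by
  have hd : ∀ y : ℝ, 0 < y → HasDerivAt (fun t : ℝ => (t - 1/t)/2 - log t)
      ((1 - (-1 / y^2))/2 - 1/y) y := by
    intro y hy0
    have := ((hasDerivAt_id y).sub ((hasDerivAt_id y).inv hy0.ne')).div_const 2
    simpa using this.fun_sub (Real.hasDerivAt_log hy0.ne')
  have key : MonotoneOn (fun t : ℝ => (t - 1/t)/2 - log t) (Ici 1) := by
    apply monotoneOn_of_deriv_nonneg (convex_Ici 1)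
    · intro y hy
      have hy0 : (0:ℝ) < y := lt_of_lt_of_le one_pos hy
      exact (hd y hy0).continuousAt.continuousWithinAt
    · intro y hy
      rw [interior_Ici] at hy
      have hy0 : (0:ℝ) < y := lt_trans one_pos hy
      exact ((hd y hy0).differentiableAt).differentiableWithinAt
    · intro y hy
      rw [interior_Ici] at hy
      have hy0 : (0:ℝ) < y := lt_trans one_pos hy
      rw [(hd y hy0).deriv]
      have h1 : (1:ℝ) ≤ y := le_of_lt hy
      rw [← sub_nonneg]
      field_simp
      nlinarith [sq_nonneg (y - 1)]
  have h := key (self_mem_Ici) ht ht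
  simp only [one_div] at h ⊢
  norm_num at h
  linarith

theorem digamma_log_bounds (x : ℝ) (hx : 0 < x) :
    log x - 1 / x ≤ digamma x ∧ digamma x ≤ log x - 1 / (2 * x) := by
  classical
  set f : ℝ → ℝ := log ∘ Real.Gamma with hf
  have hder : ∀ {y : ℝ}, 0 < y → DifferentiableAt ℝ f y := by
    intro y hy
    refine ((Real.differentiableAt_Gamma ?_).log (Real.Gamma_ne_zero ?_)) <;>
      exact fun m => ne_of_gt (by have := Nat.cast_nonneg (α := ℝ) m; linarith)
  have hdig : ∀ {y : ℝ}, 0 < y → deriv f y = digamma y := by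
    intro y hy
    rw [hf, Function.comp_def, deriv.log (Real.differentiableAt_Gamma
      (fun m => ne_of_gt (by have := Nat.cast_nonneg (α := ℝ) m; linarith)))
      (Real.Gamma_pos_of_pos hy).ne', digamma]
  have hrec : ∀ {y : ℝ}, 0 < y → f (y + 1) = f y + log y := by
    intro y hy
    simp only [hf, Function.comp_apply, Real.Gamma_add_one hy.ne',
      Real.log_mul hy.ne' (Real.Gamma_pos_of_pos hy).ne', add_comm]
  have hc : ConvexOn ℝ (Set.Ioi 0) f := Real.convexOn_log_Gamma
  -- slope over [y, y+1] equals log y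
  have hslope : ∀ {y : ℝ}, 0 < y → slope f y (y + 1) = log y := by
    intro y hy
    rw [slope_def_field, hrec hy]
    ring
  -- digamma y ≤ log y ≤ digamma (y+1)
  have hub : ∀ {y : ℝ}, 0 < y → digamma y ≤ log y := by
    intro y hy
    rw [← hdig hy, ← hslope hy]
    exact hc.deriv_le_slope (Set.mem_Ioi.mpr hy) (Set.mem_Ioi.mpr (by linarith))
      (by linarith) (hder hy)
  have hlb : ∀ {y : ℝ}, 0 < y → log y ≤ digamma (y + 1) := by
    intro y hy
    rw [← hdig (by linarith : (0:ℝ) < y + 1), ← hslope hy]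
    exact hc.slope_le_deriv (Set.mem_Ioi.mpr hy) (Set.mem_Ioi.mpr (by linarith))
      (by linarith) (hder (by linarith))
  -- recurrence for digamma
  have hdig_rec : ∀ {y : ℝ}, 0 < y → digamma (y + 1) = digamma y + 1 / y := by
    intro y hy
    rw [← hdig hy, ← hdig (by linarith : (0:ℝ) < y + 1)]
    rw [← deriv_comp_add_const, one_div, ← Real.deriv_log,
      ← deriv_add (hder hy) (Real.differentiableAt_log hy.ne')]
    apply Filter.EventuallyEq.deriv_eq
    filter_upwards [eventually_gt_nhds hy] with z hz
    exact hrec hz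
  -- lower bound
  have lower : log x - 1 / x ≤ digamma x := by
    have := hlb hx
    rw [hdig_rec hx] at this
    linarith
  refine ⟨lower, ?_⟩
  -- upper bound: F y = log y - 1/(2y) - digamma y; show F x ≥ 0
  set F : ℝ → ℝ := fun y => log y - 1 / (2 * y) - digamma y with hF
  have hstep : ∀ {y : ℝ}, 0 < y → F (y + 1) ≤ F y := by
    intro y hy
    have hy1 : (0:ℝ) < y + 1 := by linarith
    have hlog : log (y + 1) - log y ≤ 1 / (2 * y) + 1 / (2 * (y + 1)) := by
      have ht : (1:ℝ) ≤ (y + 1) / y := by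
        rw [le_div_iff₀ hy]; linarith
      have := log_le_half_sub_inv ht
      rw [Real.log_div hy1.ne' hy.ne'] at this
      have h2 : ((y + 1) / y - 1 / ((y + 1) / y)) / 2
          = 1 / (2 * y) + 1 / (2 * (y + 1)) := by
        field_simp
        ring
      rw [h2] at this
      linarith
    have e1 : 1 / (2 * y) + 1 / (2 * y) = 1 / y := by
      rw [← add_div]
      rw [div_eq_div_iff (by positivity) hy.ne']
      ring
    simp only [hF, hdig_rec hy]
    linarith
  -- F x ≥ F (x + n) for all n
  have hFn : ∀ n : ℕ, F (x + n) ≤ F x := by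
    intro n
    induction n with
    | zero => simp
    | succ k ih =>
      have hk : (0:ℝ) < x + k := by positivity
      calc F (x + (k + 1 : ℕ)) = F ((x + k) + 1) := by push_cast; ring_nf
        _ ≤ F (x + k) := hstep hk
        _ ≤ F x := ih
  -- F (x + n) ≥ -1/(2(x+n))
  have hFlb : ∀ n : ℕ, -(1 / (2 * (x + n))) ≤ F (x + n) := by
    intro n
    have hk : (0:ℝ) < x + n := by positivity
    have := hub hk
    simp only [hF]
    linarith
  -- conclude F x ≥ 0
  have hF0 : 0 ≤ F x := by
    have h1 : Filter.Tendsto (fun n : ℕ => 2 * (x + (n:ℝ))) Filter.atTop Filter.atTop := by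
      apply Filter.Tendsto.const_mul_atTop two_pos
      exact Filter.tendsto_atTop_add_const_left _ _ tendsto_natCast_atTop_atTop
    have htend : Filter.Tendsto (fun n : ℕ => -(1 / (2 * (x + (n:ℝ)))))
        Filter.atTop (nhds (-0)) := by
      apply Filter.Tendsto.neg
      exact tendsto_const_nhds.div_atTop h1
    rw [neg_zero] at htend
    refine le_of_tendsto htend ?_
    filter_upwards with n
    exact le_trans (hFlb n) (hFn n)
  simpa [hF] using hF0
end
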